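/- Let Δ be a thin pure simplicial complex of rank n. If F is a flag determined by the vertex sequence x_0, x_1, ..., x_{n-1}, then T(F) is the flag determined by the vertex sequence x_1, ..., x_{n-1}, x_n, where x_n is the unique vertex distinct from x_0 such that {x_1,...,x_n} is a facet. -/

import Mathlib

open scoped Classical

variable {V : Type*}

/-- `C` is a facet (maximal face) of a pure rank-`n` complex: a face with `n` vertices. -/
def IsFacet (n : ℕ) (faces : Finset V → Prop) (C : Finset V) : Prop :=
  faces C ∧ C.card = n

/-- `faces` describes a thin pure simplicial complex of rank `n` over the vertex set `V`:
it is downward closed, every singleton is a face, every face has at most `n` vertices and is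
contained in a facet, and every ridge (face with `n - 1` vertices) lies in exactly two facets. -/
def IsThinComplex (n : ℕ) (faces : Finset V → Prop) : Prop :=
  (∀ v : V, faces {v}) ∧
  (∀ ⦃X Y : Finset V⦄, faces X → Y ⊆ X → faces Y) ∧
  (∀ ⦃X : Finset V⦄, faces X → X.card ≤ n) ∧
  (∀ ⦃X : Finset V⦄, faces X → ∃ C : Finset V, IsFacet n faces C ∧ X ⊆ C) ∧
  (∀ ⦃R : Finset V⦄, faces R → R.card = n - 1 →
    {C : Finset V | IsFacet n faces C ∧ R ⊆ C}.ncard = 2)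

/-- A flag, encoded by the ordered vertex sequence `x_0, …, x_{n-1}` determining it:
the chain of faces is `{x_0} ⊂ {x_0,x_1} ⊂ … ⊂ {x_0,…,x_{n-1}}`, the top being a facet. -/
def IsFlag (n : ℕ) (faces : Finset V → Prop) (F : List V) : Prop :=
  F.length = n ∧ F.Nodup ∧ faces F.toFinset

/-- `G = T(F)` for the zigzag operator `T = σ_{n-1} ∘ ⋯ ∘ σ_0`: if `F` is determined by the
vertex sequence `x_0, x_1, …, x_{n-1}`, then `T(F)` is determined by `x_1, …, x_{n-1}, y` with
`y ≠ x_0`. -/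
def TStep (n : ℕ) (faces : Finset V → Prop) (F G : List V) : Prop :=
  IsFlag n faces F ∧ IsFlag n faces G ∧
    ∃ y : V, G = F.tail ++ [y] ∧ F.head? ≠ some y

/-- A zigzag of length `l`: the orbit `F, T F, T² F, …` of the operator `T` on flags, recorded
as the sequence `i ↦ Tⁱ F`; it is `l`-periodic with `l` the minimal period. -/
def IsZigzag (n : ℕ) (faces : Finset V → Prop) (l : ℕ) (F : ℕ → List V) : Prop :=
  0 < l ∧ (∀ i : ℕ, TStep n faces (F i) (F (i + 1))) ∧ (∀ i : ℕ, F (i + l) = F i) ∧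
    ∀ m : ℕ, 0 < m → (∀ i : ℕ, F (i + m) = F i) → l ≤ m

/-- The set of flags of a zigzag together with those of its reverse zigzag; two zigzags are
identified (a zigzag is identified with its reverse, and with its cyclic shifts) exactly when
these sets coincide. -/
def ZigzagClass (F : ℕ → List V) : Set (List V) :=
  Set.range F ∪ Set.range fun i => (F i).reverse

/-- `G = σ_i(F)`: the flag `G` has the same `j`-faces as `F` for all `j ≠ i`, and a different
`i`-face (the `j`-face of the flag with vertex sequence `F` is `(F.take (j+1)).toFinset`). -/
def SigmaStep (n : ℕ) (faces : Finset V → Prop) (i : ℕ) (F G : List V) : Prop :=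
  IsFlag n faces F ∧ IsFlag n faces G ∧
    (∀ j : ℕ, j < n → j ≠ i → (G.take (j + 1)).toFinset = (F.take (j + 1)).toFinset) ∧
    (G.take (i + 1)).toFinset ≠ (F.take (i + 1)).toFinset

/-- `G = T_δ(F)` where `T_δ = σ_{δ(n-1)} ∘ ⋯ ∘ σ_{δ(0)}`. -/
def TDeltaStep (n : ℕ) (faces : Finset V → Prop) (δ : Equiv.Perm (Fin n))
    (F G : List V) : Prop :=
  ∃ c : ℕ → List V, c 0 = F ∧ c n = G ∧
    ∀ i : Fin n, SigmaStep n faces (δ i) (c i) (c (i + 1))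

/-- A generalized zigzag (δ-zigzag) of length `l`: the orbit of `T_δ` on flags. -/
def IsGenZigzag (n : ℕ) (faces : Finset V → Prop) (δ : Equiv.Perm (Fin n)) (l : ℕ)
    (F : ℕ → List V) : Prop :=
  0 < l ∧ (∀ i : ℕ, TDeltaStep n faces δ (F i) (F (i + 1))) ∧ (∀ i : ℕ, F (i + l) = F i) ∧
    ∀ m : ℕ, 0 < m → (∀ i : ℕ, F (i + m) = F i) → l ≤ m

/-- Adjacency in the facet-adjacency graph `Γ_{n-1}(Δ)`: two distinct facets meeting in a ridge. -/
def FacetAdj (n : ℕ) (faces : Finset V → Prop) (C D : Finset V) : Prop :=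
  IsFacet n faces C ∧ IsFacet n faces D ∧ C ≠ D ∧ (C ∩ D).card = n - 1

/-- `p 0, p 1, …, p m` is a path in the facet-adjacency graph. -/
def IsFacetPath (n : ℕ) (faces : Finset V → Prop) (m : ℕ) (p : ℕ → Finset V) : Prop :=
  ∀ i : ℕ, i < m → FacetAdj n faces (p i) (p (i + 1))

/-- The path distance in the facet-adjacency graph `Γ_{n-1}(Δ)`. -/
noncomputable def facetDist (n : ℕ) (faces : Finset V → Prop) (X Y : Finset V) : ℕ :=
  sInf {m : ℕ | ∃ p : ℕ → Finset V, p 0 = X ∧ p m = Y ∧ IsFacetPath n faces m p}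

/-- The complex is a chamber complex: the facet-adjacency graph is connected. -/
def ChamberConnected (n : ℕ) (faces : Finset V → Prop) : Prop :=
  ∀ C D : Finset V, IsFacet n faces C → IsFacet n faces D →
    ∃ (m : ℕ) (p : ℕ → Finset V), p 0 = C ∧ p m = D ∧ IsFacetPath n faces m p


section Aux
variable [DecidableEq V]

lemma take_succ_toFinset (L : List V) (j : ℕ) (h : j < L.length) :
    (L.take (j+1)).toFinset = insert (L[j]) (L.take j).toFinset := by
  rw [List.take_succ, List.getElem?_eq_getElem h, List.toFinset_append]
  rw [Finset.union_comm]
  simp [Finset.insert_eq, -Finset.singleton_union]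

lemma getElem_not_mem_take (L : List V) (hL : L.Nodup) (j : ℕ) (h : j < L.length) :
    L[j] ∉ (L.take j).toFinset := by
  simp only [List.mem_toFinset]
  intro hmem
  have h2 := List.Nodup.sublist (List.take_sublist (j+1) L) hL
  rw [List.take_succ, List.getElem?_eq_getElem h] at h2
  rw [List.nodup_append] at h2
  exact h2.2.2 _ hmem _ (by simp) rfl

end Aux

/-- If `F` is the flag determined by the vertex sequence `x_0, …, x_{n-1}` and
`G = T(F) = σ_{n-1}(⋯(σ_0(F))⋯)`, then `G` is the flag determined by `x_1, …, x_{n-1}, x_n`,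
where `x_n` is the unique vertex distinct from `x_0` such that `{x_1, …, x_n}` is a facet. -/
theorem stmt2 (n : ℕ) (faces : Finset V → Prop) (hΔ : IsThinComplex n faces)
    (F G : List V) (hF : IsFlag n faces F)
    (c : ℕ → List V) (hc0 : c 0 = F) (hcn : c n = G)
    (hstep : ∀ i : ℕ, i < n → SigmaStep n faces i (c i) (c (i + 1))) :
    ∃ y : V, G = F.tail ++ [y] ∧ F.head? ≠ some y ∧ IsFlag n faces G ∧
      ∀ z : V, F.head? ≠ some z → IsFlag n faces (F.tail ++ [z]) → z = y := by
  classical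
  obtain ⟨hsing, hdown, hcardle, hfacets, hthin⟩ := hΔ
  obtain ⟨hFlen, hFnd, hFface⟩ := hF
  rcases Nat.eq_zero_or_pos n with hn0 | hn
  · exfalso
    subst hn0
    have hFnil : F = [] := List.length_eq_zero_iff.mp hFlen
    have hfe : faces (∅ : Finset V) := by
      rw [hFnil] at hFface; simpa using hFface
    have h2 := hthin hfe (by simp)
    have hSeq : {C : Finset V | IsFacet 0 faces C ∧ ∅ ⊆ C} = {∅} := by
      ext C
      simp only [IsFacet, Set.mem_setOf_eq, Set.mem_singleton_iff,
        Finset.card_eq_zero, Finset.empty_subset, and_true]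
      constructor
      · rintro ⟨_, h⟩; exact h
      · rintro rfl; exact ⟨hfe, rfl⟩
    rw [hSeq] at h2
    simp at h2
  -- n ≥ 1 from here
  have h0F : 0 < F.length := by omega
  have hG : IsFlag n faces G := by
    have h := (hstep (n-1) (by omega)).2.1
    rwa [show n - 1 + 1 = n by omega, hcn] at h
  obtain ⟨hGlen, hGnd, hGface⟩ := hG
  have hclen : ∀ i, i ≤ n → (c i).length = n := by
    intro i hi
    rcases Nat.eq_zero_or_pos i with rfl | hip
    · rw [hc0]; exact hFlen
    · have h := (hstep (i-1) (by omega)).2.1.1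
      rwa [show i - 1 + 1 = i by omega] at h
  have L1 : ∀ j, j < n → ∀ i, i ≤ j → ((c i).take (j+1)).toFinset = (F.take (j+1)).toFinset := by
    intro j hj i
    induction i with
    | zero => intro _; rw [hc0]
    | succ i ih =>
      intro hij
      have h2 := (hstep i (by omega)).2.2.1 j hj (by omega)
      rw [h2, ih (by omega)]
  have L2 : ∀ j, j < n → ∀ i, j + 1 ≤ i → i ≤ n →
      ((c i).take (j+1)).toFinset = ((c (j+1)).take (j+1)).toFinset := by
    intro j hj i
    induction i with
    | zero => omega
    | succ i ih =>
      intro h1 h2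
      rcases eq_or_lt_of_le h1 with he | hlt
      · rw [he]
      · have h3 := (hstep i (by omega)).2.2.1 j hj (by omega)
        rw [h3, ih (by omega) (by omega)]
  have hne_top : ∀ j, j < n →
      ((c n).take (j+1)).toFinset ≠ (F.take (j+1)).toFinset := by
    intro j hj
    have e1 : ((c n).take (j+1)).toFinset = ((c (j+1)).take (j+1)).toFinset :=
      L2 j hj n (by omega) le_rfl
    have e2 : ((c j).take (j+1)).toFinset = (F.take (j+1)).toFinset := L1 j hj j le_rfl
    rw [e1, ← e2]
    exact (hstep j hj).2.2.2
  have hx0mem : ∀ j, j < n → F[0] ∈ (F.take (j+1)).toFinset := by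
    intro j hj
    simp only [List.mem_toFinset]
    have : (F.take (j+1))[0]'(by simp [hFlen]; omega) = F[0] := List.getElem_take ..
    rw [← this]
    exact List.getElem_mem _
  have key : ∀ j, j < n → (G.take j).toFinset = ((F.take (j+1)).toFinset).erase (F[0]) := by
    intro j
    induction j with
    | zero =>
      intro _
      rw [take_succ_toFinset F 0 h0F]
      simp
    | succ j ih =>
      intro hj
      have IH := ih (by omega)
      have hjG : j < G.length := by omega
      have hBdef : (G.take (j+1)).toFinset = insert (G[j]) (G.take j).toFinset :=
        take_succ_toFinset G j hjG
      have hgmem : G[j] ∉ (G.take j).toFinset := getElem_not_mem_take G hGnd j hjG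
      have hGc : (G.take (j+1)).toFinset = ((c n).take (j+1)).toFinset := by rw [hcn]
      have hne : (G.take (j+1)).toFinset ≠ (F.take (j+1)).toFinset := by
        rw [hGc]; exact hne_top j (by omega)
      have hsub : (G.take (j+1)).toFinset ⊆ (F.take (j+2)).toFinset := by
        rw [hGc, L2 j (by omega) n (by omega) le_rfl,
          ← L1 (j+1) hj (j+1) le_rfl]
        have hlen : j + 1 < (c (j+1)).length := by rw [hclen (j+1) (by omega)]; omega
        rw [take_succ_toFinset (c (j+1)) (j+1) hlen]
        exact Finset.subset_insert _ _
      have hFj : j + 1 < F.length := by omega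
      have hAdef : (F.take (j+2)).toFinset = insert (F[j+1]) (F.take (j+1)).toFinset :=
        take_succ_toFinset F (j+1) hFj
      have hfnot : F[j+1] ∉ (F.take (j+1)).toFinset := getElem_not_mem_take F hFnd (j+1) hFj
      have hx0m : F[0] ∈ (F.take (j+1)).toFinset := hx0mem j (by omega)
      have hfx0 : F[j+1] ≠ F[0] := fun e => hfnot (e ▸ hx0m)
      have hgx0 : G[j] ≠ F[0] := by
        intro e
        apply hne
        rw [hBdef, IH, e, Finset.insert_erase hx0m]
      have hg2 : G[j] ∈ (F.take (j+2)).toFinset := by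
        apply hsub
        rw [hBdef]
        exact Finset.mem_insert_self _ _
      have hg3 : G[j] ∉ (F.take (j+1)).toFinset := by
        intro hm
        exact hgmem (IH ▸ Finset.mem_erase.mpr ⟨hgx0, hm⟩)
      have hgf : G[j] = F[j+1] := by
        rcases Finset.mem_insert.mp (hAdef ▸ hg2) with e | e
        · exact e
        · exact absurd e hg3
      rw [hBdef, IH, hgf, hAdef, Finset.erase_insert_of_ne hfx0]
  have getEq : ∀ j, ∀ _ : j + 1 < n, G[j]'(by omega) = F[j+1]'(by omega) := by
    intro j hj
    have hjG : j < G.length := by omega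
    have hFj : j + 1 < F.length := by omega
    have hBdef : (G.take (j+1)).toFinset = insert (G[j]) (G.take j).toFinset :=
      take_succ_toFinset G j hjG
    have hgmem : G[j] ∉ (G.take j).toFinset := getElem_not_mem_take G hGnd j hjG
    have hAdef : (F.take (j+2)).toFinset = insert (F[j+1]) (F.take (j+1)).toFinset :=
      take_succ_toFinset F (j+1) hFj
    have hfnot : F[j+1] ∉ (F.take (j+1)).toFinset := getElem_not_mem_take F hFnd (j+1) hFj
    have hx0m : F[0] ∈ (F.take (j+1)).toFinset := hx0mem j (by omega)
    have hfx0 : F[j+1] ≠ F[0] := fun e => hfnot (e ▸ hx0m)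
    have e1 := key j (by omega)
    have e2 := key (j+1) hj
    rw [hBdef, e1, hAdef, Finset.erase_insert_of_ne hfx0] at e2
    have hgm : G[j] ∈ insert (F[j+1]) ((F.take (j+1)).toFinset.erase F[0]) := by
      rw [← e2]; exact Finset.mem_insert_self _ _
    rcases Finset.mem_insert.mp hgm with e | e
    · exact e
    · exact absurd (e1 ▸ e) hgmem
  -- final elements
  have hn1G : n - 1 < G.length := by omega
  set y := G[n-1]'(hn1G) with hy
  set R := F.toFinset.erase (F[0]) with hR
  have hFtake : F.take n = F := by
    apply List.take_of_length_le; omega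
  have hGtake : G.take n = G := by
    apply List.take_of_length_le; omega
  have hRG : (G.take (n-1)).toFinset = R := by
    have := key (n-1) (by omega)
    rwa [show n - 1 + 1 = n by omega, hFtake] at this
  have hGtop : G.toFinset = insert y R := by
    have h := take_succ_toFinset G (n-1) hn1G
    rwa [show n - 1 + 1 = n by omega, hGtake, hRG] at h
  have hynotR : y ∉ R := by
    rw [← hRG]; exact getElem_not_mem_take G hGnd (n-1) hn1G
  have hGneF : G.toFinset ≠ F.toFinset := by
    have h := hne_top (n-1) (by omega)
    rwa [show n - 1 + 1 = n by omega, hcn, hGtake, hFtake] at h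
  have hx0F : F[0] ∈ F.toFinset := by
    simp only [List.mem_toFinset]; exact List.getElem_mem _
  have hyx0 : y ≠ F[0] := by
    intro e
    apply hGneF
    rw [hGtop, e, hR, Finset.insert_erase hx0F]
  have hFcard : F.toFinset.card = n := by
    rw [List.toFinset_card_of_nodup hFnd, hFlen]
  have hGcard : G.toFinset.card = n := by
    rw [List.toFinset_card_of_nodup hGnd, hGlen]
  have hFfacet : IsFacet n faces F.toFinset := ⟨hFface, hFcard⟩
  have hGfacet : IsFacet n faces G.toFinset := ⟨hGface, hGcard⟩
  have hRface : faces R := hdown hFface (Finset.erase_subset _ _)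
  have hRcard : R.card = n - 1 := by
    rw [hR, Finset.card_erase_of_mem hx0F, hFcard]
  have htwo := hthin hRface hRcard
  have hRsubG : R ⊆ G.toFinset := by rw [hGtop]; exact Finset.subset_insert _ _
  have hset : {C : Finset V | IsFacet n faces C ∧ R ⊆ C} = {F.toFinset, G.toFinset} := by
    obtain ⟨a, b, hab, hS⟩ := Set.ncard_eq_two.mp htwo
    have hFin : F.toFinset ∈ {C : Finset V | IsFacet n faces C ∧ R ⊆ C} :=
      ⟨hFfacet, Finset.erase_subset _ _⟩
    have hGin : G.toFinset ∈ {C : Finset V | IsFacet n faces C ∧ R ⊆ C} :=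
      ⟨hGfacet, hRsubG⟩
    rw [hS] at hFin hGin ⊢
    simp only [Set.mem_insert_iff, Set.mem_singleton_iff] at hFin hGin
    rcases hFin with h1 | h1 <;> rcases hGin with h2 | h2
    · exact absurd (h1 ▸ h2 ▸ rfl) hGneF
    · rw [h1, h2]
    · rw [h1, h2, Set.pair_comm]
    · exact absurd (h1 ▸ h2 ▸ rfl) hGneF
  have hhead : F.head? = some (F[0]) := by
    rw [List.head?_eq_head (by intro e; rw [e] at hFlen; simp at hFlen; omega),
      List.head_eq_getElem]
  have htailFin : F.tail.toFinset = R := by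
    obtain ⟨a, t, rfl⟩ := List.exists_cons_of_ne_nil
      (show F ≠ [] by intro e; rw [e] at hFlen; simp at hFlen; omega)
    have ha : a ∉ t := (List.nodup_cons.mp hFnd).1
    simp only [List.tail_cons, hR]
    show t.toFinset = ((a :: t).toFinset).erase ((a :: t)[0])
    simp only [List.toFinset_cons, List.getElem_cons_zero]
    rw [Finset.erase_insert (by simpa using ha)]
  have hGlist : G = F.tail ++ [y] := by
    apply List.ext_getElem
    · simp [hGlen, hFlen]; omega
    · intro i h1 h2
      have hiG : i < n := by omega
      rcases Nat.lt_or_ge i (n-1) with hi | hi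
      · have hit : i < F.tail.length := by simp [hFlen]; omega
        rw [List.getElem_append_left hit, List.getElem_tail]
        exact getEq i (by omega)
      · have hieq : i = n - 1 := by omega
        subst hieq
        have hit : F.tail.length ≤ n - 1 := by simp [hFlen]
        rw [List.getElem_append_right hit]
        simp [hFlen, hy]
  refine ⟨y, hGlist, ?_, ⟨hGlen, hGnd, hGface⟩, ?_⟩
  · rw [hhead]
    intro e
    exact hyx0 (Option.some.inj e).symm
  · intro z hz hzflag
    have hzx0 : z ≠ F[0] := by
      rw [hhead] at hz
      intro e; exact hz (by rw [e])
    obtain ⟨hzlen, hznd, hzface⟩ := hzflag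
    have hztop : (F.tail ++ [z]).toFinset = insert z R := by
      rw [List.toFinset_append, htailFin]
      simp [Finset.union_comm, Finset.insert_eq, -Finset.singleton_union, -Finset.union_singleton]
    have hznotR : z ∉ R := by
      rw [← htailFin]
      rw [List.nodup_append] at hznd
      intro hm
      exact hznd.2.2 _ (List.mem_toFinset.mp hm) _ (by simp) rfl
    have hzcard : (insert z R).card = n := by
      rw [← hztop, List.toFinset_card_of_nodup hznd, hzlen]
    have hzfacet : IsFacet n faces (insert z R) := ⟨hztop ▸ hzface, hzcard⟩
    have hzin : insert z R ∈ {C : Finset V | IsFacet n faces C ∧ R ⊆ C} :=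
      ⟨hzfacet, Finset.subset_insert _ _⟩
    rw [hset] at hzin
    rcases hzin with h | h
    · exfalso
      apply hzx0
      have hzF : z ∈ F.toFinset := h ▸ Finset.mem_insert_self z R
      by_contra hne'
      exact hznotR (Finset.mem_erase.mpr ⟨hne', hzF⟩)
    · have hzG : z ∈ insert y R := by
        rw [← hGtop, ← h]; exact Finset.mem_insert_self z R
      rcases Finset.mem_insert.mp hzG with e | e
      · exact e
      · exact absurd e hznotR
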